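/- For a finite strategic game, if a mixed strategy profile p is a Nash equilibrium of a perturbed game (G, η), then for every player i and pure strategies s_ij, s_il in S_i, u_i(s_ij, p_{-i}) < u_i(s_il, p_{-i}) implies p_ij = η_ij, i.e., any suboptimal pure strategy is played with exactly its minimum allowed probability. -/
import Mathlib


open Finset Filter

/-- Expected payoff of a mixed strategy profile `p` for pure payoff function `U`. -/
noncomputable def expPay {ι : Type*} [Fintype ι] [DecidableEq ι] {S : ι → Type*} [∀ i, Fintype (S i)]
    (U : (∀ i, S i) → ℝ) (p : ∀ i, S i → ℝ) : ℝ :=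
  ∑ s : ∀ i, S i, (∏ i, p i (s i)) * U s

/-- The degenerate mixed strategy putting all mass on the pure strategy `s`. -/
def pureStrat {J : Type*} [DecidableEq J] (s : J) : J → ℝ := fun t => if t = s then 1 else 0

/-- `q` is a mixed strategy: a probability vector. -/
def IsMixed {J : Type*} [Fintype J] (q : J → ℝ) : Prop := (∀ s, 0 ≤ q s) ∧ ∑ s, q s = 1

lemma expPay_update_eq {ι : Type*} [Fintype ι] [DecidableEq ι]
    {S : ι → Type*} [∀ i, Fintype (S i)] [∀ i, DecidableEq (S i)]
    (U : (∀ j, S j) → ℝ) (p : ∀ j, S j → ℝ) (i : ι) (q : S i → ℝ) :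
    expPay U (Function.update p i q)
      = ∑ s : ∀ j, S j, q (s i) * ((∏ j ∈ univ.erase i, p j (s j)) * U s) := by
  unfold expPay
  refine Finset.sum_congr rfl fun s _ => ?_
  rw [← mul_assoc]
  congr 1
  rw [← Finset.mul_prod_erase univ (fun j => Function.update p i q j (s j)) (mem_univ i)]
  simp only [Function.update_self]
  congr 1
  refine Finset.prod_congr rfl fun j hj => ?_
  rw [Function.update_of_ne (Finset.ne_of_mem_erase hj)]

lemma expPay_linear {ι : Type*} [Fintype ι] [DecidableEq ι]
    {S : ι → Type*} [∀ i, Fintype (S i)] [∀ i, DecidableEq (S i)]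
    (U : (∀ j, S j) → ℝ) (p : ∀ j, S j → ℝ) (i : ι) (q : S i → ℝ) :
    expPay U (Function.update p i q)
      = ∑ a : S i, q a * expPay U (Function.update p i (pureStrat a)) := by
  rw [expPay_update_eq]
  simp only [expPay_update_eq, Finset.mul_sum]
  rw [Finset.sum_comm]
  refine Finset.sum_congr rfl fun s _ => ?_
  simp [pureStrat, mul_ite, ite_mul, mul_comm]

/-- In a Nash equilibrium of a perturbed game `(G, η)`, any pure strategy that is a
suboptimal response is played with exactly its minimum allowed probability `η i s`. -/
theorem stmt0 {ι : Type*} [Fintype ι] [DecidableEq ι]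
    {S : ι → Type*} [∀ i, Fintype (S i)] [∀ i, DecidableEq (S i)]
    (U : ∀ i, (∀ j, S j) → ℝ) (η : ∀ i, S i → ℝ) (p : ∀ i, S i → ℝ)
    (hηpos : ∀ i s, 0 < η i s) (hηsum : ∀ i, ∑ s, η i s < 1)
    (hp : ∀ i, IsMixed (p i) ∧ ∀ s, η i s ≤ p i s)
    (hNash : ∀ i, ∀ q : S i → ℝ, IsMixed q → (∀ s, η i s ≤ q s) →
      expPay (U i) (Function.update p i q) ≤ expPay (U i) p) :
    ∀ i, ∀ s t : S i,
      expPay (U i) (Function.update p i (pureStrat s)) <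
        expPay (U i) (Function.update p i (pureStrat t)) → p i s = η i s := by
  intro i s t hlt
  by_contra hne
  have hst : s ≠ t := by rintro rfl; exact lt_irrefl _ hlt
  have hps : η i s < p i s := lt_of_le_of_ne ((hp i).2 s) (Ne.symm hne)
  set ε := p i s - η i s with hε
  have hεpos : 0 < ε := by simp [hε]; linarith
  set q : S i → ℝ := fun a => p i a + (if a = t then ε else 0) - (if a = s then ε else 0)
    with hq
  have hqmix : IsMixed q := by
    constructor
    · intro a
      by_cases has : a = s
      · subst has
        simp [hq, if_neg hst, hε]
        exact (hηpos i a).le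
      · by_cases hat : a = t
        · subst hat
          simp [hq, has]
          have := ((hp i).1).1 a
          linarith
        · simp [hq, has, hat]
          exact ((hp i).1).1 a
    · simp only [hq, Finset.sum_sub_distrib, Finset.sum_add_distrib,
        Finset.sum_ite_eq', Finset.mem_univ, if_true]
      rw [((hp i).1).2]; ring
  have hqη : ∀ a, η i a ≤ q a := by
    intro a
    by_cases has : a = s
    · subst has; simp [hq, if_neg hst, hε]
    · by_cases hat : a = t
      · subst hat
        simp [hq, has]
        have := (hp i).2 a
        linarith
      · simp [hq, has, hat]
        exact (hp i).2 a
  have hN := hNash i q hqmix hqη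
  have hpeq : expPay (U i) p = ∑ a : S i, p i a * expPay (U i) (Function.update p i (pureStrat a)) := by
    conv_lhs => rw [← Function.update_eq_self i p]
    exact expPay_linear (U i) p i (p i)
  rw [expPay_linear, hpeq] at hN
  set F : S i → ℝ := fun a => expPay (U i) (Function.update p i (pureStrat a)) with hF
  have hexp : ∑ a : S i, q a * F a
      = (∑ a : S i, p i a * F a) + ε * F t - ε * F s := by
    simp only [hq, sub_mul, add_mul, Finset.sum_sub_distrib, Finset.sum_add_distrib,
      ite_mul, zero_mul, Finset.sum_ite_eq', Finset.mem_univ, if_true]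
  rw [hexp] at hN
  have : ε * F s < ε * F t := by
    apply mul_lt_mul_of_pos_left hlt hεpos
  linarith
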